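/- arXiv:2304.03114 — 2 statements merged into one kernel-verified Lean document; each statement's English description precedes it below -/
import Mathlib

section
/- Let ν ∈ (0,1) and 0 < ε < 1. There exists a constant C > 0 such that for all real a, b with |a| ≤ |b|, the integral over ℝ of dξ/(|ξ|^ν · ⟨ξ-a⟩ · ⟨ξ-b⟩) is at most C/(⟨a⟩^ν · ⟨b-a⟩^{1-ε}). -/
/-- The Japanese bracket `⟨x⟩ = (1 + x²)^{1/2}`. -/
noncomputable def jb (x : ℝ) : ℝ := Real.sqrt (1 + x ^ 2)

lemma one_le_jb (x : ℝ) : 1 ≤ jb x := by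
  rw [jb]
  have : Real.sqrt 1 ≤ Real.sqrt (1 + x ^ 2) := Real.sqrt_le_sqrt (by nlinarith)
  simpa using this

lemma jb_pos (x : ℝ) : 0 < jb x := lt_of_lt_of_le one_pos (one_le_jb x)

lemma abs_le_jb (x : ℝ) : |x| ≤ jb x := by
  rw [jb, ← Real.sqrt_sq_eq_abs]
  exact Real.sqrt_le_sqrt (by nlinarith)

lemma jb_sq (x : ℝ) : jb x ^ 2 = 1 + x ^ 2 := Real.sq_sqrt (by positivity)

lemma jb_sub_le (x y : ℝ) : jb (x - y) ≤ jb x + jb y := by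
  have h1 : |x| ≤ jb x := abs_le_jb x
  have h2 : |y| ≤ jb y := abs_le_jb y
  have h3 : |x * y| = |x| * |y| := abs_mul x y
  have h4 : -(x*y) ≤ |x*y| := neg_le_abs _
  have h5 : (0:ℝ) ≤ |x| := abs_nonneg x
  have h6 : (0:ℝ) ≤ |y| := abs_nonneg y
  have key : 1 + (x - y)^2 ≤ (jb x + jb y)^2 := by
    have e1 : (jb x + jb y)^2 = (1 + x^2) + (1 + y^2) + 2 * (jb x * jb y) := by
      have := jb_sq x; have := jb_sq y; ring_nf; nlinarith [jb_sq x, jb_sq y]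
    nlinarith [mul_le_mul h1 h2 h6 (le_trans h5 h1)]
  calc jb (x - y) = Real.sqrt (1 + (x-y)^2) := rfl
    _ ≤ Real.sqrt ((jb x + jb y)^2) := Real.sqrt_le_sqrt key
    _ = jb x + jb y := Real.sqrt_sq (by have := jb_pos x; have := jb_pos y; linarith)

/-- key pointwise estimate (half). -/
lemma key_half (u v w ε : ℝ) (hu : 1 ≤ u) (hv : 1 ≤ v) (huv : u ≤ v)
    (hw : 1 ≤ w) (hwv : w ≤ u + v) (hε0 : 0 < ε) (hε1 : ε < 1) :
    1 / (u * v) ≤ 2 * u ^ (-(1+ε)) / w ^ (1-ε) := by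
  have hu0 : (0:ℝ) < u := lt_of_lt_of_le one_pos hu
  have hv0 : (0:ℝ) < v := lt_of_lt_of_le one_pos hv
  have hw0 : (0:ℝ) < w := lt_of_lt_of_le one_pos hw
  have hwv2 : w ≤ 2 * v := le_trans hwv (by linarith)
  -- w^{1-ε} ≤ 2 v^{1-ε} ≤ 2 v * u^{-ε}
  have h1 : w ^ (1-ε) ≤ (2*v) ^ (1-ε) :=
    Real.rpow_le_rpow hw0.le hwv2 (by linarith)
  have h2 : (2*v) ^ (1-ε) = 2 ^ (1-ε) * v ^ (1-ε) := Real.mul_rpow (by norm_num) hv0.le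
  have h3 : (2:ℝ) ^ (1-ε) ≤ 2 := by
    nth_rewrite 2 [show (2:ℝ) = 2 ^ (1:ℝ) by simp]
    exact Real.rpow_le_rpow_of_exponent_le (by norm_num) (by linarith)
  have h4 : v ^ (1-ε) = v * v ^ (-ε) := by
    rw [show (1-ε) = 1 + (-ε) by ring, Real.rpow_add hv0, Real.rpow_one]
  have h5 : v ^ (-ε) ≤ u ^ (-ε) := Real.rpow_le_rpow_of_nonpos hu0 huv (by linarith)
  have h6 : w ^ (1-ε) ≤ 2 * (v * u ^ (-ε)) := by
    calc w ^ (1-ε) ≤ 2 ^ (1-ε) * v ^ (1-ε) := by rw [← h2]; exact h1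
      _ ≤ 2 * (v * v^(-ε)) := by rw [← h4]; apply mul_le_mul_of_nonneg_right h3 (by positivity)
      _ ≤ 2 * (v * u^(-ε)) := by
          apply mul_le_mul_of_nonneg_left (mul_le_mul_of_nonneg_left h5 hv0.le) (by norm_num)
  rw [div_le_div_iff₀ (by positivity) (by positivity)]
  have hue : u ^ (-(1+ε)) = u^(-ε) / u := by
    rw [show -(1+ε) = -ε + (-1:ℝ) by ring, Real.rpow_add hu0, Real.rpow_neg_one]
    ring
  rw [hue]
  have : 2 * (u ^ (-ε) / u) * (u * v) = 2 * (v * u ^ (-ε)) := by field_simp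
  rw [this, one_mul]
  exact h6

lemma key_pt (u v w ε : ℝ) (hu : 1 ≤ u) (hv : 1 ≤ v)
    (hw : 1 ≤ w) (hwv : w ≤ u + v) (hε0 : 0 < ε) (hε1 : ε < 1) :
    1 / (u * v) ≤ 2 * (u ^ (-(1+ε)) + v ^ (-(1+ε))) / w ^ (1-ε) := by
  have hw0 : (0:ℝ) < w := lt_of_lt_of_le one_pos hw
  rcases le_total u v with h | h
  · have := key_half u v w ε hu hv h hw hwv hε0 hε1
    apply le_trans this
    apply div_le_div_of_nonneg_right ?_ (by positivity)
    have : (0:ℝ) ≤ v ^ (-(1+ε)) := Real.rpow_nonneg (by positivity) _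
    linarith
  · have := key_half v u w ε hv hu h hw (by linarith) hε0 hε1
    rw [mul_comm u v]
    apply le_trans this
    apply div_le_div_of_nonneg_right ?_ (by positivity)
    have : (0:ℝ) ≤ u ^ (-(1+ε)) := Real.rpow_nonneg (by positivity) _
    linarith

open MeasureTheory Set

lemma jb_rpow_eq (x s : ℝ) : jb x ^ s = (1 + x^2) ^ (s/2) := by
  rw [jb, Real.sqrt_eq_rpow, ← Real.rpow_mul (by positivity), one_div]
  ring_nf

lemma integrable_jb_rpow {s : ℝ} (hs : 1 < s) :
    Integrable (fun x : ℝ => jb x ^ (-s)) := by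
  have h := integrable_rpow_neg_one_add_norm_sq (E := ℝ) (μ := volume) (r := s)
    (by simpa using hs)
  have : (fun x : ℝ => jb x ^ (-s)) = fun x : ℝ => ((1:ℝ) + ‖x‖^2) ^ (-s/2) := by
    funext x
    rw [jb_rpow_eq, Real.norm_eq_abs, sq_abs]
  rw [this]
  exact h

lemma meas_jb_rpow (c s : ℝ) : Measurable (fun ξ : ℝ => jb (ξ - c) ^ s) := by
  have hc : Continuous fun ξ : ℝ => jb (ξ - c) := by
    unfold jb; fun_prop
  exact (hc.rpow_const fun x => Or.inl (jb_pos _).ne').measurable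

lemma integrable_jb_rpow_shift {s : ℝ} (hs : 1 < s) (c : ℝ) :
    Integrable (fun ξ : ℝ => jb (ξ - c) ^ (-s)) :=
  Integrable.comp_sub_right (integrable_jb_rpow hs) c

lemma integral_jb_rpow_shift (s c : ℝ) :
    (∫ ξ : ℝ, jb (ξ - c) ^ (-s)) = ∫ x : ℝ, jb x ^ (-s) :=
  integral_sub_right_eq_self (fun x => jb x ^ (-s)) c

section singular
variable {ν : ℝ}

lemma intInt_abs_rpow_pos (hν0 : 0 < ν) (hν1 : ν < 1) {R : ℝ} (hR : 0 ≤ R) :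
    IntervalIntegrable (fun x : ℝ => |x| ^ (-ν)) volume 0 R := by
  rw [intervalIntegrable_iff]
  refine (intervalIntegrable_iff.mp (intervalIntegral.intervalIntegrable_rpow' (a := 0) (b := R)
    (by linarith : (-1:ℝ) < -ν))).congr_fun ?_ measurableSet_uIoc
  intro x hx
  rw [uIoc_of_le hR] at hx
  simp [abs_of_pos hx.1]

lemma intInt_abs_rpow_neg (hν0 : 0 < ν) (hν1 : ν < 1) {R : ℝ} (hR : 0 ≤ R) :
    IntervalIntegrable (fun x : ℝ => |x| ^ (-ν)) volume (-R) 0 := by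
  have h := (IntervalIntegrable.iff_comp_neg (by simp)).mp (intInt_abs_rpow_pos hν0 hν1 hR)
  simp only [abs_neg, neg_zero] at h
  exact h.symm

lemma integral_abs_rpow_pos (hν0 : 0 < ν) (hν1 : ν < 1) {R : ℝ} (hR : 0 ≤ R) :
    ∫ x in (0:ℝ)..R, |x| ^ (-ν) = R ^ (1-ν) / (1-ν) := by
  have h1 : ∫ x in (0:ℝ)..R, |x| ^ (-ν) = ∫ x in (0:ℝ)..R, x ^ (-ν) := by
    apply intervalIntegral.integral_congr
    intro x hx
    rw [uIcc_of_le hR] at hx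
    simp [abs_of_nonneg hx.1]
  rw [h1, integral_rpow (Or.inl (by linarith))]
  rw [Real.zero_rpow (by linarith : -ν + 1 ≠ 0)]
  ring_nf

lemma integral_abs_rpow_neg (hν0 : 0 < ν) (hν1 : ν < 1) {R : ℝ} (hR : 0 ≤ R) :
    ∫ x in (-R)..(0:ℝ), |x| ^ (-ν) = R ^ (1-ν) / (1-ν) := by
  have h := intervalIntegral.integral_comp_neg (a := 0) (b := R)
    (fun x : ℝ => |x| ^ (-ν))
  simp only [abs_neg, neg_zero] at h
  rw [← h, integral_abs_rpow_pos hν0 hν1 hR]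

lemma integrableOn_abs_rpow (hν0 : 0 < ν) (hν1 : ν < 1) {R : ℝ} (hR : 0 ≤ R) :
    IntegrableOn (fun x : ℝ => |x| ^ (-ν)) (Icc (-R) R) := by
  rw [← intervalIntegrable_iff_integrableOn_Icc_of_le (by linarith)]
  exact (intInt_abs_rpow_neg hν0 hν1 hR).trans (intInt_abs_rpow_pos hν0 hν1 hR)

lemma integral_Icc_abs_rpow (hν0 : 0 < ν) (hν1 : ν < 1) {R : ℝ} (hR : 0 ≤ R) :
    ∫ x in Icc (-R) R, |x| ^ (-ν) = 2 * R ^ (1-ν) / (1-ν) := by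
  rw [integral_Icc_eq_integral_Ioc,
    ← intervalIntegral.integral_of_le (by linarith : -R ≤ R),
    ← intervalIntegral.integral_add_adjacent_intervals
      (intInt_abs_rpow_neg hν0 hν1 hR) (intInt_abs_rpow_pos hν0 hν1 hR),
    integral_abs_rpow_pos hν0 hν1 hR, integral_abs_rpow_neg hν0 hν1 hR]
  ring

end singular

lemma f_nonneg (ν a b : ℝ) (ξ : ℝ) : 0 ≤ 1 / (|ξ| ^ ν * jb (ξ - a) * jb (ξ - b)) := by
  apply div_nonneg zero_le_one
  exact mul_nonneg (mul_nonneg (Real.rpow_nonneg (abs_nonneg ξ) ν) (jb_pos _).le) (jb_pos _).le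

lemma f_eq (ν : ℝ) (hν0 : 0 < ν) (a b ξ : ℝ) :
    1 / (|ξ| ^ ν * jb (ξ - a) * jb (ξ - b))
      = |ξ| ^ (-ν) * (1 / (jb (ξ - a) * jb (ξ - b))) := by
  rcases eq_or_ne ξ 0 with h0 | h0
  · subst h0
    simp [Real.zero_rpow hν0.ne', Real.zero_rpow (show -ν ≠ 0 by simpa using hν0.ne')]
  · have hA : 0 < |ξ| ^ ν := Real.rpow_pos_of_pos (abs_pos.mpr h0) ν
    rw [Real.rpow_neg (abs_nonneg ξ)]
    have hu := jb_pos (ξ - a)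
    have hv := jb_pos (ξ - b)
    field_simp

lemma integral_le_majorant (ν ε : ℝ) (hν0 : 0 < ν) (hν1 : ν < 1) (hε0 : 0 < ε) (hε1 : ε < 1)
    (a b R c₁ c₂ : ℝ) (hR : 0 ≤ R)
    (hpt : ∀ ξ : ℝ, 1 / (|ξ| ^ ν * jb (ξ - a) * jb (ξ - b)) ≤
      c₁ * (Icc (-R) R).indicator (fun x => |x| ^ (-ν)) ξ
      + c₂ * (jb (ξ - a) ^ (-(1+ε)) + jb (ξ - b) ^ (-(1+ε)))) :
    (∫ ξ : ℝ, 1 / (|ξ| ^ ν * jb (ξ - a) * jb (ξ - b)))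
      ≤ c₁ * (2 * R ^ (1-ν) / (1-ν)) + c₂ * (2 * ∫ x : ℝ, jb x ^ (-(1+ε))) := by
  have h1ε : (1:ℝ) < 1 + ε := by linarith
  have hind : Integrable ((Icc (-R) R).indicator (fun x : ℝ => |x| ^ (-ν))) :=
    (integrable_indicator_iff measurableSet_Icc).mpr (integrableOn_abs_rpow hν0 hν1 hR)
  have hia := integrable_jb_rpow_shift h1ε a
  have hib := integrable_jb_rpow_shift h1ε b
  have hsum : Integrable (fun ξ : ℝ => jb (ξ - a) ^ (-(1+ε)) + jb (ξ - b) ^ (-(1+ε))) :=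
    hia.add hib
  have hg : Integrable (fun ξ : ℝ => c₁ * (Icc (-R) R).indicator (fun x => |x| ^ (-ν)) ξ
      + c₂ * (jb (ξ - a) ^ (-(1+ε)) + jb (ξ - b) ^ (-(1+ε)))) :=
    (hind.const_mul c₁).add (hsum.const_mul c₂)
  have hmono := integral_mono_of_nonneg
    (f := fun ξ : ℝ => 1 / (|ξ| ^ ν * jb (ξ - a) * jb (ξ - b)))
    (Filter.Eventually.of_forall fun ξ => f_nonneg ν a b ξ) hg
    (Filter.Eventually.of_forall hpt)
  refine hmono.trans ?_
  rw [integral_add (hind.const_mul c₁) (hsum.const_mul c₂),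
    integral_const_mul, integral_const_mul,
    integral_indicator measurableSet_Icc,
    integral_add hia hib, integral_jb_rpow_shift, integral_jb_rpow_shift,
    integral_Icc_abs_rpow hν0 hν1 hR]
  apply le_of_eq
  ring

lemma uv_facts (a b ξ : ℝ) :
    jb (b - a) ≤ jb (ξ - a) + jb (ξ - b) := by
  have h := jb_sub_le (ξ - b) (ξ - a)
  rw [show (ξ - b) - (ξ - a) = -(b - a) by ring] at h
  rw [show jb (-(b-a)) = jb (b-a) by unfold jb; rw [neg_pow]; ring_nf] at h
  linarith

lemma one_div_uv_le (a b ξ : ℝ) :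
    1 / (jb (ξ - a) * jb (ξ - b)) ≤ 2 / jb (b - a) := by
  have hu : 1 ≤ jb (ξ - a) := one_le_jb _
  have hv : 1 ≤ jb (ξ - b) := one_le_jb _
  have hw : 1 ≤ jb (b - a) := one_le_jb _
  have hwle := uv_facts a b ξ
  rw [div_le_div_iff₀ (by nlinarith) (by linarith)]
  nlinarith

lemma inv_w_le (ε w : ℝ) (hw : 1 ≤ w) (hε0 : 0 < ε) (hε1 : ε < 1) :
    w⁻¹ ≤ w ^ (-(1-ε)) := by
  rw [← Real.rpow_neg_one w]
  exact Real.rpow_le_rpow_of_exponent_le hw (by linarith)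

lemma hpt_caseA (ν ε a b : ℝ) (hν0 : 0 < ν) (hν1 : ν < 1) (hε0 : 0 < ε) (hε1 : ε < 1) (ξ : ℝ) :
    1 / (|ξ| ^ ν * jb (ξ - a) * jb (ξ - b)) ≤
      (2 * jb (b-a) ^ (-(1-ε))) * (Icc (-1:ℝ) 1).indicator (fun x => |x| ^ (-ν)) ξ
      + (2 * jb (b-a) ^ (-(1-ε))) * (jb (ξ - a) ^ (-(1+ε)) + jb (ξ - b) ^ (-(1+ε))) := by
  have hu : 1 ≤ jb (ξ - a) := one_le_jb _
  have hv : 1 ≤ jb (ξ - b) := one_le_jb _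
  have hw : 1 ≤ jb (b - a) := one_le_jb _
  have hw0 : (0:ℝ) < jb (b - a) := by linarith
  have hwle := uv_facts a b ξ
  have hwneg : (0:ℝ) ≤ jb (b-a) ^ (-(1-ε)) := Real.rpow_nonneg hw0.le _
  have hterm2 : 0 ≤ (2 * jb (b-a) ^ (-(1-ε))) * (jb (ξ - a) ^ (-(1+ε)) + jb (ξ - b) ^ (-(1+ε))) := by
    have h1 := Real.rpow_nonneg (by linarith : (0:ℝ) ≤ jb (ξ-a)) (-(1+ε))
    have h2 := Real.rpow_nonneg (by linarith : (0:ℝ) ≤ jb (ξ-b)) (-(1+ε))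
    positivity
  rw [f_eq ν hν0 a b ξ]
  rcases le_or_gt |ξ| 1 with hξ | hξ
  · -- |ξ| ≤ 1 : use the indicator term
    have hmem : ξ ∈ Icc (-1:ℝ) 1 := by
      constructor <;> [linarith [neg_abs_le ξ]; linarith [le_abs_self ξ]]
    rw [indicator_of_mem hmem]
    have h1 : 1 / (jb (ξ - a) * jb (ξ - b)) ≤ 2 * jb (b-a) ^ (-(1-ε)) := by
      calc 1 / (jb (ξ - a) * jb (ξ - b)) ≤ 2 / jb (b - a) := one_div_uv_le a b ξ
        _ = 2 * (jb (b-a))⁻¹ := by rw [div_eq_mul_inv]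
        _ ≤ 2 * jb (b-a) ^ (-(1-ε)) := by
            have := inv_w_le ε (jb (b-a)) hw hε0 hε1; linarith
    have habs : 0 ≤ |ξ| ^ (-ν) := Real.rpow_nonneg (abs_nonneg ξ) _
    have : |ξ| ^ (-ν) * (1 / (jb (ξ - a) * jb (ξ - b)))
        ≤ |ξ| ^ (-ν) * (2 * jb (b-a) ^ (-(1-ε))) := mul_le_mul_of_nonneg_left h1 habs
    calc |ξ| ^ (-ν) * (1 / (jb (ξ - a) * jb (ξ - b)))
        ≤ |ξ| ^ (-ν) * (2 * jb (b-a) ^ (-(1-ε))) := this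
      _ = (2 * jb (b-a) ^ (-(1-ε))) * |ξ| ^ (-ν) := by ring
      _ ≤ _ := le_add_of_nonneg_right hterm2
  · -- |ξ| > 1 : use the key pointwise bound
    have hmem : ξ ∉ Icc (-1:ℝ) 1 := by
      intro hmem
      rcases hmem with ⟨h1, h2⟩
      rcases abs_le.mpr ⟨h1, h2⟩ |>.lt_or_eq with h | h
      · exact absurd hξ (not_lt.mpr (abs_le.mpr ⟨h1, h2⟩))
      · exact absurd hξ (not_lt.mpr (abs_le.mpr ⟨h1, h2⟩))
    rw [indicator_of_notMem hmem, mul_zero, zero_add]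
    have habs : |ξ| ^ (-ν) ≤ 1 :=
      Real.rpow_le_one_of_one_le_of_nonpos hξ.le (by linarith)
    have hkey := key_pt (jb (ξ-a)) (jb (ξ-b)) (jb (b-a)) ε hu hv hw hwle hε0 hε1
    have h1 : 1 / (jb (ξ - a) * jb (ξ - b)) ≥ 0 := by
      apply div_nonneg zero_le_one; nlinarith
    calc |ξ| ^ (-ν) * (1 / (jb (ξ - a) * jb (ξ - b)))
        ≤ 1 * (1 / (jb (ξ - a) * jb (ξ - b))) := mul_le_mul_of_nonneg_right habs h1
      _ = 1 / (jb (ξ - a) * jb (ξ - b)) := by ring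
      _ ≤ 2 * (jb (ξ-a) ^ (-(1+ε)) + jb (ξ-b) ^ (-(1+ε))) / jb (b-a) ^ (1-ε) := hkey
      _ = (2 * jb (b-a) ^ (-(1-ε))) * (jb (ξ - a) ^ (-(1+ε)) + jb (ξ - b) ^ (-(1+ε))) := by
          rw [Real.rpow_neg hw0.le, div_eq_mul_inv]; ring

lemma jb_le_of_sq {c : ℝ} (hc : 0 ≤ c) {x y : ℝ} (h : 1 + x^2 ≤ c^2 * (1 + y^2)) :
    jb x ≤ c * jb y := by
  calc jb x ≤ Real.sqrt (c^2 * (1+y^2)) := Real.sqrt_le_sqrt h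
    _ = c * jb y := by
        rw [Real.sqrt_mul (by positivity), Real.sqrt_sq hc]; rfl

lemma sqrt5_le_3 : Real.sqrt 5 ≤ 3 := by
  rw [show (3:ℝ) = Real.sqrt 9 by
    rw [show (9:ℝ) = 3^2 by norm_num, Real.sqrt_sq (by norm_num)]]
  exact Real.sqrt_le_sqrt (by norm_num)

lemma one_le_sqrt5 : 1 ≤ Real.sqrt 5 := by
  rw [show (1:ℝ) = Real.sqrt 1 by rw [Real.sqrt_one]]
  exact Real.sqrt_le_sqrt (by norm_num)

lemma hpt_caseB (ν ε a b : ℝ) (hν0 : 0 < ν) (hν1 : ν < 1) (hε0 : 0 < ε) (hε1 : ε < 1)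
    (hab : |a| ≤ |b|) (ha2 : 2 ≤ |a|) (ξ : ℝ) :
    1 / (|ξ| ^ ν * jb (ξ - a) * jb (ξ - b)) ≤
      (8 * (jb a)⁻¹ * jb (b-a) ^ (-(1-ε)))
        * (Icc (-(|a|/2)) (|a|/2)).indicator (fun x => |x| ^ (-ν)) ξ
      + (6 * jb a ^ (-ν) * jb (b-a) ^ (-(1-ε)))
        * (jb (ξ - a) ^ (-(1+ε)) + jb (ξ - b) ^ (-(1+ε))) := by
  have hu : 1 ≤ jb (ξ - a) := one_le_jb _
  have hv : 1 ≤ jb (ξ - b) := one_le_jb _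
  have hw : 1 ≤ jb (b - a) := one_le_jb _
  have hja : 1 ≤ jb a := one_le_jb _
  have hw0 : (0:ℝ) < jb (b - a) := by linarith
  have hja0 : (0:ℝ) < jb a := by linarith
  have hwle := uv_facts a b ξ
  have hwneg : (0:ℝ) ≤ jb (b-a) ^ (-(1-ε)) := Real.rpow_nonneg hw0.le _
  have hjaneg : (0:ℝ) ≤ jb a ^ (-ν) := Real.rpow_nonneg hja0.le _
  have hrp1 : (0:ℝ) ≤ jb (ξ-a) ^ (-(1+ε)) := Real.rpow_nonneg (by linarith) _
  have hrp2 : (0:ℝ) ≤ jb (ξ-b) ^ (-(1+ε)) := Real.rpow_nonneg (by linarith) _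
  have hterm2 : 0 ≤ (6 * jb a ^ (-ν) * jb (b-a) ^ (-(1-ε)))
      * (jb (ξ - a) ^ (-(1+ε)) + jb (ξ - b) ^ (-(1+ε))) := by positivity
  rw [f_eq ν hν0 a b ξ]
  rcases le_or_gt |ξ| (|a|/2) with hξ | hξ
  · -- |ξ| ≤ |a|/2
    have hmem : ξ ∈ Icc (-(|a|/2)) (|a|/2) := by
      constructor <;> [linarith [neg_abs_le ξ]; linarith [le_abs_self ξ]]
    rw [indicator_of_mem hmem]
    -- jb a ≤ 2 jb (ξ - a)
    have hu2 : jb a ≤ 2 * jb (ξ - a) := by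
      apply jb_le_of_sq (by norm_num)
      have h1 : |a| - |ξ| ≤ |a - ξ| := abs_sub_abs_le_abs_sub a ξ
      have h2 : (a - ξ)^2 = |a - ξ|^2 := (sq_abs _).symm
      have h3 : (ξ - a)^2 = (a - ξ)^2 := by ring
      nlinarith [abs_nonneg ξ, abs_nonneg (a - ξ), sq_abs a]
    -- jb (b - a) ≤ 4 jb (ξ - b)
    have hv4 : jb (b - a) ≤ 4 * jb (ξ - b) := by
      apply jb_le_of_sq (by norm_num)
      have h1 : |b| - |ξ| ≤ |b - ξ| := abs_sub_abs_le_abs_sub b ξ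
      have h2 : |b - a| ≤ |b| + |a| := by
        rw [sub_eq_add_neg]
        calc |b + -a| ≤ |b| + |-a| := abs_add_le b (-a)
          _ = |b| + |a| := by rw [abs_neg]
      have e1 : (b-a)^2 ≤ 4 * b^2 := by
        have h3 : |b - a| ≤ 2 * |b| := by linarith
        have h4 := pow_le_pow_left₀ (abs_nonneg (b-a)) h3 2
        have h5 : (2 * |b|)^2 = 4 * b^2 := by rw [mul_pow, sq_abs]; ring
        rw [h5] at h4
        rw [← sq_abs (b-a)]
        exact h4
      have e2 : b^2 ≤ 4 * (ξ - b)^2 := by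
        have h3 : |b| / 2 ≤ |b - ξ| := by linarith
        have h4 := pow_le_pow_left₀ (by positivity : (0:ℝ) ≤ |b| / 2) h3 2
        have h5 : (|b|/2)^2 = b^2/4 := by rw [div_pow, sq_abs]; norm_num
        have h6 : (ξ - b)^2 = |b - ξ|^2 := by rw [sq_abs]; ring
        rw [h5] at h4
        rw [h6]
        linarith
      linarith
    have huv : 1 / (jb (ξ - a) * jb (ξ - b)) ≤ 8 / (jb a * jb (b - a)) := by
      rw [div_le_div_iff₀ (by nlinarith) (by nlinarith)]
      nlinarith [mul_le_mul hu2 hv4 hw0.le (by linarith : (0:ℝ) ≤ 2 * jb (ξ - a))]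
    have hcoef : 8 / (jb a * jb (b - a)) ≤ 8 * (jb a)⁻¹ * jb (b-a) ^ (-(1-ε)) := by
      rw [div_eq_mul_inv, mul_inv]
      have := inv_w_le ε (jb (b-a)) hw hε0 hε1
      have hinva : (0:ℝ) ≤ (jb a)⁻¹ := by positivity
      calc 8 * ((jb a)⁻¹ * (jb (b-a))⁻¹) = 8 * (jb a)⁻¹ * (jb (b-a))⁻¹ := by ring
        _ ≤ 8 * (jb a)⁻¹ * jb (b-a) ^ (-(1-ε)) := by
            apply mul_le_mul_of_nonneg_left this (by positivity)
    have habs : 0 ≤ |ξ| ^ (-ν) := Real.rpow_nonneg (abs_nonneg ξ) _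
    calc |ξ| ^ (-ν) * (1 / (jb (ξ - a) * jb (ξ - b)))
        ≤ |ξ| ^ (-ν) * (8 * (jb a)⁻¹ * jb (b-a) ^ (-(1-ε))) :=
          mul_le_mul_of_nonneg_left (huv.trans hcoef) habs
      _ = (8 * (jb a)⁻¹ * jb (b-a) ^ (-(1-ε))) * |ξ| ^ (-ν) := by ring
      _ ≤ _ := le_add_of_nonneg_right hterm2
  · -- |ξ| > |a|/2
    have hξ0 : (0:ℝ) < |ξ| := by linarith
    -- |ξ|^{-ν} ≤ 3 * jb a ^{-ν}
    have hja5 : jb a ≤ Real.sqrt 5 / 2 * |a| := by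
      have hsq : (Real.sqrt 5 / 2 * |a|)^2 = 5/4 * a^2 := by
        rw [mul_pow, div_pow, Real.sq_sqrt (by norm_num : (0:ℝ) ≤ 5), sq_abs]; norm_num
      have h24 : (2:ℝ)^2 ≤ |a|^2 := pow_le_pow_left₀ (by norm_num) ha2 2
      rw [sq_abs] at h24
      calc jb a ≤ Real.sqrt ((Real.sqrt 5 / 2 * |a|)^2) := by
            apply Real.sqrt_le_sqrt
            rw [hsq]
            nlinarith
        _ = Real.sqrt 5 / 2 * |a| := Real.sqrt_sq (by positivity)
    have hxlow : jb a / Real.sqrt 5 ≤ |ξ| := by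
      have h5 : (0:ℝ) < Real.sqrt 5 := by linarith [one_le_sqrt5]
      rw [div_le_iff₀ h5]
      nlinarith [hja5, one_le_sqrt5]
    have habs : |ξ| ^ (-ν) ≤ 3 * jb a ^ (-ν) := by
      have h5 : (0:ℝ) < Real.sqrt 5 := by linarith [one_le_sqrt5]
      have h0 : (0:ℝ) < jb a / Real.sqrt 5 := by positivity
      calc |ξ| ^ (-ν) ≤ (jb a / Real.sqrt 5) ^ (-ν) :=
            Real.rpow_le_rpow_of_nonpos h0 hxlow (by linarith)
        _ = jb a ^ (-ν) * (Real.sqrt 5) ^ ν := by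
            rw [Real.div_rpow hja0.le h5.le, Real.rpow_neg h5.le, div_eq_mul_inv, inv_inv]
        _ ≤ jb a ^ (-ν) * 3 := by
            apply mul_le_mul_of_nonneg_left ?_ hjaneg
            calc (Real.sqrt 5) ^ ν ≤ (Real.sqrt 5) ^ (1:ℝ) :=
                  Real.rpow_le_rpow_of_exponent_le one_le_sqrt5 (by linarith)
              _ = Real.sqrt 5 := Real.rpow_one _
              _ ≤ 3 := sqrt5_le_3
        _ = 3 * jb a ^ (-ν) := by ring
    have hkey := key_pt (jb (ξ-a)) (jb (ξ-b)) (jb (b-a)) ε hu hv hw hwle hε0 hε1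
    have huvpos : (0:ℝ) ≤ 1 / (jb (ξ - a) * jb (ξ - b)) :=
      div_nonneg zero_le_one (mul_nonneg (by linarith) (by linarith))
    have hmain : |ξ| ^ (-ν) * (1 / (jb (ξ - a) * jb (ξ - b)))
        ≤ (6 * jb a ^ (-ν) * jb (b-a) ^ (-(1-ε)))
          * (jb (ξ - a) ^ (-(1+ε)) + jb (ξ - b) ^ (-(1+ε))) := by
      calc |ξ| ^ (-ν) * (1 / (jb (ξ - a) * jb (ξ - b)))
          ≤ (3 * jb a ^ (-ν)) * (1 / (jb (ξ - a) * jb (ξ - b))) :=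
            mul_le_mul_of_nonneg_right habs huvpos
        _ ≤ (3 * jb a ^ (-ν))
            * (2 * (jb (ξ-a) ^ (-(1+ε)) + jb (ξ-b) ^ (-(1+ε))) / jb (b-a) ^ (1-ε)) := by
            apply mul_le_mul_of_nonneg_left hkey (by positivity)
        _ = (6 * jb a ^ (-ν) * jb (b-a) ^ (-(1-ε)))
            * (jb (ξ - a) ^ (-(1+ε)) + jb (ξ - b) ^ (-(1+ε))) := by
            rw [Real.rpow_neg hw0.le, div_eq_mul_inv]; ring
    have hind : 0 ≤ (8 * (jb a)⁻¹ * jb (b-a) ^ (-(1-ε)))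
        * (Icc (-(|a|/2)) (|a|/2)).indicator (fun x => |x| ^ (-ν)) ξ := by
      apply mul_nonneg (by positivity)
      apply indicator_nonneg
      intro x _
      exact Real.rpow_nonneg (abs_nonneg x) _
    linarith

/-- Lemma on integrals with a singularity at the origin: for `ν ∈ (0,1)` and `0 < ε < 1`,
for all `a, b ∈ ℝ` with `|a| ≤ |b|`,
`∫_ℝ |ξ|^{-ν} ⟨ξ-a⟩^{-1} ⟨ξ-b⟩^{-1} dξ ≲ ⟨a⟩^{-ν} ⟨b-a⟩^{-(1-ε)}`. -/
theorem integral_singular_bracket_le (ν ε : ℝ) (hν0 : 0 < ν) (hν1 : ν < 1)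
    (hε0 : 0 < ε) (hε1 : ε < 1) :
    ∃ C > 0, ∀ a b : ℝ, |a| ≤ |b| →
      (∫ ξ : ℝ, 1 / (|ξ| ^ ν * jb (ξ - a) * jb (ξ - b)))
        ≤ C / (jb a ^ ν * jb (b - a) ^ (1 - ε)) := by
  have h1ν : (0:ℝ) < 1 - ν := by linarith
  set K : ℝ := ∫ x : ℝ, jb x ^ (-(1+ε)) with hK_def
  have hK0 : 0 ≤ K := integral_nonneg fun x => Real.rpow_nonneg (jb_pos x).le _
  have hz1 : (1:ℝ) ≤ (1-ν)⁻¹ := by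
    have h := inv_anti₀ h1ν (by linarith : 1-ν ≤ 1)
    simpa using h
  refine ⟨(17 + 12*K)/(1-ν), div_pos (by linarith) h1ν, ?_⟩
  intro a b hab
  have hja : 1 ≤ jb a := one_le_jb _
  have hja0 : (0:ℝ) < jb a := jb_pos a
  have hw0 : (0:ℝ) < jb (b-a) := jb_pos _
  have hQpos : (0:ℝ) < jb (b-a) ^ (1-ε) := Real.rpow_pos_of_pos hw0 _
  have hPpos : (0:ℝ) < jb a ^ ν := Real.rpow_pos_of_pos hja0 _
  have hQinv : jb (b-a) ^ (-(1-ε)) = (jb (b-a) ^ (1-ε))⁻¹ := Real.rpow_neg hw0.le _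
  have hPinv : jb a ^ (-ν) = (jb a ^ ν)⁻¹ := Real.rpow_neg hja0.le _
  have hq'0 : (0:ℝ) ≤ jb (b-a) ^ (-(1-ε)) := Real.rpow_nonneg hw0.le _
  have hC0 : (0:ℝ) ≤ (17 + 12*K)/(1-ν) := div_nonneg (by linarith) h1ν.le
  rcases le_or_gt |a| 2 with hA | hA
  · -- Case A : |a| ≤ 2
    have hmain := integral_le_majorant ν ε hν0 hν1 hε0 hε1 a b 1
      (2 * jb (b-a) ^ (-(1-ε))) (2 * jb (b-a) ^ (-(1-ε))) (by norm_num)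
      (hpt_caseA ν ε a b hν0 hν1 hε0 hε1)
    rw [Real.one_rpow] at hmain
    refine hmain.trans ?_
    have hP3 : jb a ^ ν ≤ 3 := by
      have h1 : jb a ≤ 3 := by
        calc jb a ≤ Real.sqrt 5 := by
              apply Real.sqrt_le_sqrt
              have := pow_le_pow_left₀ (abs_nonneg a) hA 2
              rw [sq_abs] at this
              norm_num at this ⊢
              linarith
          _ ≤ 3 := sqrt5_le_3
      calc jb a ^ ν ≤ jb a ^ (1:ℝ) :=
            Real.rpow_le_rpow_of_exponent_le hja (by linarith)
        _ = jb a := Real.rpow_one _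
        _ ≤ 3 := h1
    have h34 : 4/(1-ν) + 4*K ≤ ((17 + 12*K)/(1-ν))/3 := by
      rw [le_div_iff₀ (by norm_num : (0:ℝ) < 3)]
      have hz0 : (0:ℝ) ≤ (1-ν)⁻¹ := by positivity
      have hKz : 0 ≤ K * ((1-ν)⁻¹ - 1) := mul_nonneg hK0 (by linarith)
      have e : (4/(1-ν) + 4*K)*3 = 12*(1-ν)⁻¹ + 12*K := by
        rw [div_eq_mul_inv]; ring
      have e2 : (17 + 12*K)/(1-ν) = 17*(1-ν)⁻¹ + 12*K*(1-ν)⁻¹ := by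
        rw [div_eq_mul_inv]; ring
      rw [e, e2]
      nlinarith
    calc 2 * jb (b-a) ^ (-(1-ε)) * (2 * 1 / (1-ν)) + 2 * jb (b-a) ^ (-(1-ε)) * (2*K)
        = (4/(1-ν) + 4*K) * (jb (b-a) ^ (1-ε))⁻¹ := by rw [hQinv]; ring
      _ ≤ (((17 + 12*K)/(1-ν))/3) * (jb (b-a) ^ (1-ε))⁻¹ :=
          mul_le_mul_of_nonneg_right h34 (by positivity)
      _ = ((17 + 12*K)/(1-ν)) / (3 * jb (b-a) ^ (1-ε)) := by
          rw [← div_eq_mul_inv, div_div]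
      _ ≤ ((17 + 12*K)/(1-ν)) / (jb a ^ ν * jb (b-a) ^ (1-ε)) := by
          apply div_le_div_of_nonneg_left hC0 (by positivity)
          exact mul_le_mul_of_nonneg_right hP3 hQpos.le
  · -- Case B : |a| > 2
    have ha2 : 2 ≤ |a| := hA.le
    have hmain := integral_le_majorant ν ε hν0 hν1 hε0 hε1 a b (|a|/2)
      (8 * (jb a)⁻¹ * jb (b-a) ^ (-(1-ε))) (6 * jb a ^ (-ν) * jb (b-a) ^ (-(1-ε)))
      (by positivity)
      (hpt_caseB ν ε a b hν0 hν1 hε0 hε1 hab ha2)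
    refine hmain.trans ?_
    have hstep : (jb a)⁻¹ * (|a|/2) ^ (1-ν) ≤ jb a ^ (-ν) := by
      have hterm1 : (|a|/2) ^ (1-ν) ≤ jb a ^ (1-ν) := by
        apply Real.rpow_le_rpow (by positivity) ?_ (by linarith)
        calc |a|/2 ≤ |a| := by linarith [abs_nonneg a]
          _ ≤ jb a := abs_le_jb a
      have hsplit : jb a ^ ((1:ℝ)-ν) = jb a * jb a ^ (-ν) := by
        rw [show (1:ℝ)-ν = 1 + (-ν) by ring, Real.rpow_add hja0, Real.rpow_one]
      calc (jb a)⁻¹ * (|a|/2) ^ (1-ν) ≤ (jb a)⁻¹ * jb a ^ (1-ν) :=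
            mul_le_mul_of_nonneg_left hterm1 (by positivity)
        _ = jb a ^ (-ν) := by
            rw [hsplit, ← mul_assoc, inv_mul_cancel₀ hja0.ne', one_mul]
    have hp0 : (0:ℝ) ≤ jb a ^ (-ν) := Real.rpow_nonneg hja0.le _
    have hpq0 : (0:ℝ) ≤ jb a ^ (-ν) * jb (b-a) ^ (-(1-ε)) := mul_nonneg hp0 hq'0
    have e1 : 8 * (jb a)⁻¹ * jb (b-a) ^ (-(1-ε)) * (2*(|a|/2) ^ (1-ν)/(1-ν))
          + 6 * jb a ^ (-ν) * jb (b-a) ^ (-(1-ε)) * (2*K)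
        = 16/(1-ν) * ((jb a)⁻¹ * (|a|/2) ^ (1-ν)) * jb (b-a) ^ (-(1-ε))
          + 12*K*(jb a ^ (-ν) * jb (b-a) ^ (-(1-ε))) := by
      field_simp
      ring
    have e2 : 16/(1-ν) * ((jb a)⁻¹ * (|a|/2) ^ (1-ν)) * jb (b-a) ^ (-(1-ε))
        ≤ 16/(1-ν) * jb a ^ (-ν) * jb (b-a) ^ (-(1-ε)) :=
      mul_le_mul_of_nonneg_right
        (mul_le_mul_of_nonneg_left hstep (by positivity)) hq'0
    have e3 : 16/(1-ν) * (jb a ^ (-ν) * jb (b-a) ^ (-(1-ε)))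
          + 12*K*(jb a ^ (-ν) * jb (b-a) ^ (-(1-ε)))
        ≤ (17 + 12*K)/(1-ν) * (jb a ^ (-ν) * jb (b-a) ^ (-(1-ε))) := by
      have hz0 : (0:ℝ) ≤ (1-ν)⁻¹ := by positivity
      have hh : 0 ≤ (K * ((1-ν)⁻¹ - 1)) * (jb a ^ (-ν) * jb (b-a) ^ (-(1-ε))) :=
        mul_nonneg (mul_nonneg hK0 (by linarith)) hpq0
      have e4 : 16/(1-ν) = 16*(1-ν)⁻¹ := by rw [div_eq_mul_inv]
      have e5 : (17 + 12*K)/(1-ν) = 17*(1-ν)⁻¹ + 12*K*(1-ν)⁻¹ := by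
        rw [div_eq_mul_inv]; ring
      rw [e4, e5]
      nlinarith [mul_nonneg hz0 hpq0]
    calc 8 * (jb a)⁻¹ * jb (b-a) ^ (-(1-ε)) * (2*(|a|/2) ^ (1-ν)/(1-ν))
          + 6 * jb a ^ (-ν) * jb (b-a) ^ (-(1-ε)) * (2*K)
        = 16/(1-ν) * ((jb a)⁻¹ * (|a|/2) ^ (1-ν)) * jb (b-a) ^ (-(1-ε))
          + 12*K*(jb a ^ (-ν) * jb (b-a) ^ (-(1-ε))) := e1
      _ ≤ 16/(1-ν) * (jb a ^ (-ν) * jb (b-a) ^ (-(1-ε)))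
          + 12*K*(jb a ^ (-ν) * jb (b-a) ^ (-(1-ε))) := by
          have e2' : 16/(1-ν) * jb a ^ (-ν) * jb (b-a) ^ (-(1-ε))
              = 16/(1-ν) * (jb a ^ (-ν) * jb (b-a) ^ (-(1-ε))) := by ring
          rw [e2'] at e2
          exact add_le_add_left e2 _
      _ ≤ (17 + 12*K)/(1-ν) * (jb a ^ (-ν) * jb (b-a) ^ (-(1-ε))) := e3
      _ = (17 + 12*K)/(1-ν) / (jb a ^ ν * jb (b-a) ^ (1-ε)) := by
          rw [hPinv, hQinv, ← mul_inv, ← div_eq_mul_inv]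
end

section
/- There exists a constant c > 0 such that for every integer k ≥ 1, ∫_{k²/2 ≤ |ξ| ≤ 3k²/2} |ξ|^{1-2H₀} (∫₀^{min(T,1)} |∫₀^t e^{is(k²-ξ)} ds|² dt) dξ ≥ c · k^{2-4H₀}, for any fixed T > 0 and H₀ ∈ (1/2,1), where the constant c depends on T, H₀ but not on k. -/
open MeasureTheory intervalIntegral


/-- Lower bound for the key divergence integral: for fixed `T > 0` and `H₀ ∈ (1/2,1)`,
there is `c > 0` such that for every integer `k ≥ 1`,
`∫_{k²/2 ≤ |ξ| ≤ 3k²/2} |ξ|^{1-2H₀} (∫₀^{min(T,1)} |∫₀^t e^{is(k²-ξ)} ds|² dt) dξ ≥ c k^{2-4H₀}`. -/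
theorem divergence_integral_lower_bound (T H₀ : ℝ) (hT : 0 < T)
    (hH₀ : H₀ ∈ Set.Ioo (1 / 2 : ℝ) 1) :
    ∃ c > 0, ∀ k : ℕ, 1 ≤ k →
      c * (k : ℝ) ^ (2 - 4 * H₀) ≤
        ∫ ξ in {ξ : ℝ | (k : ℝ) ^ 2 / 2 ≤ |ξ| ∧ |ξ| ≤ 3 * (k : ℝ) ^ 2 / 2},
          |ξ| ^ (1 - 2 * H₀) *
            ∫ t in (0 : ℝ)..(min T 1),
              ‖∫ s in (0 : ℝ)..t,
                  Complex.exp (Complex.I * (s : ℂ) * (((k : ℝ) ^ 2 - ξ : ℝ) : ℂ))‖ ^ 2 := by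
  obtain ⟨hH₁, hH₂⟩ := hH₀
  set T' : ℝ := min T 1 with hT'def
  have hT'0 : 0 < T' := lt_min hT one_pos
  have hT'1 : T' ≤ 1 := min_le_right _ _
  have hpi : (1:ℝ)/2 ≤ Real.pi := by linarith [Real.pi_gt_three]
  have hcos : 0 < Real.cos (1/2) := by
    apply Real.cos_pos_of_mem_Ioo
    constructor <;> [linarith [Real.pi_gt_three]; linarith [Real.pi_gt_three]]
  have hexp : (1 : ℝ) - 2 * H₀ ≤ 0 := by linarith
  refine ⟨(1/2) * ((3/2 : ℝ) ^ (1 - 2*H₀) * (Real.cos (1/2) ^ 2 * (T' ^ 3 / 3))), ?_, ?_⟩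
  · have := Real.rpow_pos_of_pos (by norm_num : (0:ℝ) < 3/2) (1 - 2*H₀)
    positivity
  intro k hk
  have hk1 : (1:ℝ) ≤ (k:ℝ) ^ 2 := by
    have : (1:ℝ) ≤ (k:ℝ) := by exact_mod_cast hk
    nlinarith
  set K : ℝ := (k:ℝ) ^ 2 with hKdef
  -- the jointly continuous inner integral
  set G : ℝ × ℝ → ℂ := fun p =>
    ∫ s in (0:ℝ)..p.2, Complex.exp (Complex.I * (s:ℂ) * ((K - p.1 : ℝ) : ℂ)) with hGdef
  have hGcont : Continuous G := by
    apply intervalIntegral.continuous_parametric_intervalIntegral_of_continuous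
      (f := fun (p : ℝ × ℝ) (s : ℝ) => Complex.exp (Complex.I * (s:ℂ) * ((K - p.1 : ℝ) : ℂ)))
      (s := fun p : ℝ × ℝ => p.2)
    · apply Complex.continuous_exp.comp
      apply Continuous.mul
      · exact (continuous_const.mul (Complex.continuous_ofReal.comp continuous_snd))
      · exact Complex.continuous_ofReal.comp (continuous_const.sub (continuous_fst.comp continuous_fst))
    · exact continuous_snd
  set g : ℝ → ℝ := fun ξ => ∫ t in (0:ℝ)..T', ‖G (ξ, t)‖ ^ 2 with hgdef
  have hgcont : Continuous g := by
    apply intervalIntegral.continuous_parametric_intervalIntegral_of_continuous'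
      (f := fun (ξ : ℝ) (t : ℝ) => ‖G (ξ, t)‖ ^ 2)
    exact ((hGcont.norm).pow 2)
  have hgnonneg : ∀ ξ, 0 ≤ g ξ := fun ξ =>
    intervalIntegral.integral_nonneg hT'0.le (fun t _ => by positivity)
  set f : ℝ → ℝ := fun ξ => |ξ| ^ (1 - 2*H₀) * g ξ with hfdef
  have hfnonneg : ∀ ξ, 0 ≤ f ξ := fun ξ =>
    mul_nonneg (Real.rpow_nonneg (abs_nonneg ξ) _) (hgnonneg ξ)
  set S : Set ℝ := {ξ : ℝ | K / 2 ≤ |ξ| ∧ |ξ| ≤ 3 * K / 2} with hSdef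
  have hSclosed : IsClosed S := by
    have : S = (fun ξ : ℝ => |ξ|) ⁻¹' Set.Icc (K/2) (3*K/2) := by
      ext ξ; simp [hSdef, Set.mem_Icc]
    rw [this]
    exact isClosed_Icc.preimage continuous_abs
  have hScompact : IsCompact S := by
    apply (isCompact_Icc (a := -(3*K/2)) (b := 3*K/2)).of_isClosed_subset hSclosed
    intro ξ hξ
    exact ⟨neg_le_of_abs_le hξ.2, le_of_abs_le hξ.2⟩
  have hfcontS : ContinuousOn f S := by
    apply ContinuousOn.mul _ hgcont.continuousOn
    apply ContinuousOn.rpow_const continuous_abs.continuousOn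
    intro ξ hξ
    left
    have h1 : K / 2 ≤ |ξ| := hξ.1
    have : 0 < |ξ| := lt_of_lt_of_le (by linarith) h1
    exact ne_of_gt this
  have hfint : IntegrableOn f S := hfcontS.integrableOn_compact hScompact
  set S' : Set ℝ := Set.Icc (K - 1/2) K with hS'def
  have hS'sub : S' ⊆ S := by
    rintro ξ ⟨h1, h2⟩
    have hξpos : 0 < ξ := by linarith
    have habs : |ξ| = ξ := abs_of_pos hξpos
    exact ⟨by rw [habs]; linarith, by rw [habs]; linarith⟩
  -- pointwise lower bound on S'
  set A : ℝ := (3/2 : ℝ) ^ (1 - 2*H₀) * (k:ℝ) ^ (2 - 4*H₀) * (Real.cos (1/2) ^ 2 * (T' ^ 3 / 3)) with hAdef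
  have hKpow : (K : ℝ) ^ (1 - 2*H₀) = (k:ℝ) ^ (2 - 4*H₀) := by
    rw [hKdef, ← Real.rpow_natCast (k:ℝ) 2, ← Real.rpow_mul (Nat.cast_nonneg k)]
    congr 1
    push_cast
    ring
  have hbound : ∀ ξ ∈ S', A ≤ f ξ := by
    rintro ξ ⟨h1, h2⟩
    have hξpos : 0 < ξ := by linarith
    have habs : |ξ| = ξ := abs_of_pos hξpos
    have hθ0 : 0 ≤ K - ξ := by linarith
    have hθh : K - ξ ≤ 1/2 := by linarith
    -- rpow bound
    have hr1 : (3/2 : ℝ) ^ (1 - 2*H₀) * (k:ℝ) ^ (2 - 4*H₀) ≤ |ξ| ^ (1 - 2*H₀) := by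
      have h32 : |ξ| ≤ 3/2 * K := by rw [habs]; linarith
      have := Real.rpow_le_rpow_of_nonpos (by rw [habs]; exact hξpos) h32 hexp
      calc (3/2 : ℝ) ^ (1 - 2*H₀) * (k:ℝ) ^ (2 - 4*H₀)
          = (3/2 * K) ^ (1 - 2*H₀) := by
            rw [Real.mul_rpow (by norm_num) (by linarith : (0:ℝ) ≤ K), hKpow]
        _ ≤ |ξ| ^ (1 - 2*H₀) := this
    -- inner bound
    have hr2 : Real.cos (1/2) ^ 2 * (T' ^ 3 / 3) ≤ g ξ := by
      have hGlb : ∀ t ∈ Set.Icc (0:ℝ) T', Real.cos (1/2) ^ 2 * t ^ 2 ≤ ‖G (ξ, t)‖ ^ 2 := by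
        rintro t ⟨ht0, htT⟩
        have hint : IntervalIntegrable
            (fun s : ℝ => Complex.exp (Complex.I * (s:ℂ) * ((K - ξ : ℝ) : ℂ))) volume 0 t := by
          apply Continuous.intervalIntegrable
          exact Complex.continuous_exp.comp
            ((continuous_const.mul Complex.continuous_ofReal).mul continuous_const)
        have hre : (G (ξ, t)).re
            = ∫ s in (0:ℝ)..t, Real.cos (s * (K - ξ)) := by
          have := (Complex.reCLM.intervalIntegral_comp_comm hint).symm
          simp only [Complex.reCLM_apply] at this
          rw [hGdef]
          simp only
          rw [this]
          congr 1
          ext s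
          have : Complex.I * (s:ℂ) * ((K - ξ : ℝ) : ℂ) = ((s * (K - ξ) : ℝ) : ℂ) * Complex.I := by
            push_cast; ring
          rw [this, Complex.exp_mul_I]
          simp [Complex.cos_ofReal_re, Complex.sin_ofReal_im, ← Complex.ofReal_sub,
            ← Complex.ofReal_mul]
        have hcoslb : t * Real.cos (1/2) ≤ (G (ξ, t)).re := by
          rw [hre]
          have : t * Real.cos (1/2) = ∫ _ in (0:ℝ)..t, Real.cos (1/2) := by
            simp [mul_comm]
          rw [this]
          apply intervalIntegral.integral_mono_on ht0
          · exact intervalIntegrable_const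
          · apply Continuous.intervalIntegrable
            exact Real.continuous_cos.comp (continuous_id.mul continuous_const)
          · rintro s ⟨hs0, hst⟩
            apply Real.cos_le_cos_of_nonneg_of_le_pi (mul_nonneg hs0 hθ0) hpi
            calc s * (K - ξ) ≤ t * (K - ξ) := by
                  exact mul_le_mul_of_nonneg_right hst hθ0
              _ ≤ 1 * (1/2) := by
                  apply mul_le_mul (le_trans htT hT'1) hθh hθ0 (by norm_num)
              _ = 1/2 := by norm_num
        have hnorm : t * Real.cos (1/2) ≤ ‖G (ξ, t)‖ := by
          calc t * Real.cos (1/2) ≤ (G (ξ, t)).re := hcoslb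
            _ ≤ ‖G (ξ, t)‖ := Complex.re_le_norm _
            _ = ‖G (ξ, t)‖ := rfl
        have htc : 0 ≤ t * Real.cos (1/2) := mul_nonneg ht0 hcos.le
        calc Real.cos (1/2) ^ 2 * t ^ 2 = (t * Real.cos (1/2)) ^ 2 := by ring
          _ ≤ ‖G (ξ, t)‖ ^ 2 := pow_le_pow_left₀ htc hnorm 2
      have : (∫ t in (0:ℝ)..T', Real.cos (1/2) ^ 2 * t ^ 2) ≤ g ξ := by
        apply intervalIntegral.integral_mono_on hT'0.le
        · apply Continuous.intervalIntegrable
          exact continuous_const.mul (continuous_pow 2)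
        · apply Continuous.intervalIntegrable
          exact (hGcont.comp (Continuous.prodMk_right ξ)).norm.pow 2
        · intro t ht
          exact hGlb t ⟨ht.1, ht.2⟩
      calc Real.cos (1/2) ^ 2 * (T' ^ 3 / 3)
          = ∫ t in (0:ℝ)..T', Real.cos (1/2) ^ 2 * t ^ 2 := by
            rw [intervalIntegral.integral_const_mul, integral_pow]
            norm_num
        _ ≤ g ξ := this
    calc A = ((3/2 : ℝ) ^ (1 - 2*H₀) * (k:ℝ) ^ (2 - 4*H₀)) * (Real.cos (1/2) ^ 2 * (T' ^ 3 / 3)) := by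
          rw [hAdef]
      _ ≤ |ξ| ^ (1 - 2*H₀) * g ξ := by
          apply mul_le_mul hr1 hr2 (by positivity) (Real.rpow_nonneg (abs_nonneg ξ) _)
      _ = f ξ := rfl
  -- assemble
  have hvol : (volume S').toReal = 1/2 := by
    rw [hS'def, Real.volume_Icc]
    rw [ENNReal.toReal_ofReal (by norm_num : (0:ℝ) ≤ K - (K - 1/2))]
    ring
  have step1 : A * (1/2) ≤ ∫ ξ in S', f ξ := by
    rw [← hvol]
    exact setIntegral_ge_of_const_le_real measurableSet_Icc
      (by rw [Real.volume_Icc]; exact ENNReal.ofReal_ne_top)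
      hbound (hfint.mono_set hS'sub)
  have step2 : (∫ ξ in S', f ξ) ≤ ∫ ξ in S, f ξ := by
    apply setIntegral_mono_set hfint
    · exact Filter.Eventually.of_forall fun ξ => hfnonneg ξ
    · exact HasSubset.Subset.eventuallyLE hS'sub
  calc (1/2) * ((3/2 : ℝ) ^ (1 - 2*H₀) * (Real.cos (1/2) ^ 2 * (T' ^ 3 / 3))) * (k:ℝ) ^ (2 - 4*H₀)
      = A * (1/2) := by rw [hAdef]; ring
    _ ≤ ∫ ξ in S', f ξ := step1
    _ ≤ ∫ ξ in S, f ξ := step2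
end
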